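/- For a = (m⁴ - n⁴)²(m⁴ - 6m²n² + n⁴)², b = 4m²n²(m² + n²)²(m⁴ - 6m²n² + n⁴)², c = 64m⁴n⁴(m² - n²)⁴, each of a, b, c is a perfect square, and the three elementary symmetric functions a + b + c, ab + bc + ca, abc are all perfect squares. -/
import Mathlib

theorem allsquaresol1 (m n : ℤ) :
    let a := (m ^ 4 - n ^ 4) ^ 2 * (m ^ 4 - 6 * m ^ 2 * n ^ 2 + n ^ 4) ^ 2
    let b := 4 * m ^ 2 * n ^ 2 * (m ^ 2 + n ^ 2) ^ 2 * (m ^ 4 - 6 * m ^ 2 * n ^ 2 + n ^ 4) ^ 2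
    let c := 64 * m ^ 4 * n ^ 4 * (m ^ 2 - n ^ 2) ^ 4
    (∃ x : ℤ, a = x ^ 2) ∧ (∃ y : ℤ, b = y ^ 2) ∧ (∃ z : ℤ, c = z ^ 2) ∧
    (∃ f : ℤ, a + b + c = f ^ 2) ∧ (∃ g : ℤ, a * b + b * c + c * a = g ^ 2) ∧
      (∃ k : ℤ, a * b * c = k ^ 2) := by
  refine ⟨⟨(m ^ 4 - n ^ 4) * (m ^ 4 - 6 * m ^ 2 * n ^ 2 + n ^ 4), by ring⟩,
    ⟨2 * m * n * (m ^ 2 + n ^ 2) * (m ^ 4 - 6 * m ^ 2 * n ^ 2 + n ^ 4), by ring⟩,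
    ⟨8 * m ^ 2 * n ^ 2 * (m ^ 2 - n ^ 2) ^ 2, by ring⟩,
    ⟨(m ^ 2 + n ^ 2) ^ 4 - 8 * m ^ 2 * n ^ 2 * (m ^ 2 + n ^ 2) ^ 2 + 32 * m ^ 4 * n ^ 4, by ring⟩,
    ⟨2 * m * n * (m ^ 2 + n ^ 2) ^ 4 * (m ^ 4 - 6 * m ^ 2 * n ^ 2 + n ^ 4) * (m ^ 2 - n ^ 2), by ring⟩,
    ⟨16 * m ^ 3 * n ^ 3 * (m ^ 2 + n ^ 2) ^ 2 * (m ^ 4 - 6 * m ^ 2 * n ^ 2 + n ^ 4) ^ 2 * (m ^ 2 - n ^ 2) ^ 3, by ring⟩⟩
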